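/- Let E be a subspace of L¹(μ) (over a measure space, real scalars) containing no ε-almost disjoint pairs, i.e., for all f, g ∈ E with ‖f‖ = ‖g‖ = 1 one has ‖|f| ∧ |g|‖ ≥ ε. Then E does (2/ε)-stable phase retrieval: for all f, g ∈ E, min(‖f-g‖, ‖f+g‖) ≤ (2/ε)‖|f| - |g|‖. -/

import Mathlib

open MeasureTheory

private lemma min_abs_le_abs_abs_sub_abs (s t : ℝ) :
    min |s - t| |s + t| ≤ |(|s| - |t|)| := by
  rcases le_total 0 s with hs|hs <;> rcases le_total 0 t with ht|ht
  · rw [abs_of_nonneg hs, abs_of_nonneg ht]; exact min_le_left _ _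
  · rw [abs_of_nonneg hs, abs_of_nonpos ht, sub_neg_eq_add]; exact min_le_right _ _
  · rw [abs_of_nonpos hs, abs_of_nonneg ht, show -s - t = -(s + t) by ring, abs_neg]
    exact min_le_right _ _
  · rw [abs_of_nonpos hs, abs_of_nonpos ht, show -s - -t = -(s - t) by ring, abs_neg]
    exact min_le_left _ _

/-- A subspace of real `L¹(μ)` with no `ε`-almost disjoint pairs does `(2/ε)`-stable
phase retrieval. -/
theorem SPR_of_no_almost_disjoint_pairs_L1 {Ω : Type*} [MeasurableSpace Ω] (μ : Measure Ω)
    (E : Submodule ℝ (Lp ℝ 1 μ)) (ε : ℝ) (hε : 0 < ε)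
    (h : ∀ f ∈ E, ∀ g ∈ E, ‖f‖ = 1 → ‖g‖ = 1 → ε ≤ ‖|f| ⊓ |g|‖) :
    ∀ f ∈ E, ∀ g ∈ E, min ‖f - g‖ ‖f + g‖ ≤ (2 / ε) * ‖|f| - |g|‖ := by
  intro f hf g hg
  -- WLOG ‖f - g‖ ≤ ‖f + g‖
  wlog hab : ‖f - g‖ ≤ ‖f + g‖ with H
  · have := H μ E ε hε h f hf (-g) (E.neg_mem hg)
      (by rw [sub_neg_eq_add, ← sub_eq_add_neg]; exact le_of_not_ge hab)
    rwa [sub_neg_eq_add, ← sub_eq_add_neg, abs_neg, min_comm] at this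
  by_cases hfg : f - g = 0
  · rw [hfg, norm_zero, min_eq_left (norm_nonneg _)]
    exact mul_nonneg (by positivity) (norm_nonneg _)
  have ha : 0 < ‖f - g‖ := norm_pos_iff.mpr hfg
  have hb : 0 < ‖f + g‖ := lt_of_lt_of_le ha hab
  set u : Lp ℝ 1 μ := ‖f - g‖⁻¹ • (f - g) with hu_def
  set v : Lp ℝ 1 μ := ‖f + g‖⁻¹ • (f + g) with hv_def
  have hu : ‖u‖ = 1 := norm_smul_inv_norm hfg
  have hv : ‖v‖ = 1 := norm_smul_inv_norm (norm_pos_iff.mp hb)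
  have hkey := h u (E.smul_mem _ (E.sub_mem hf hg)) v (E.smul_mem _ (E.add_mem hf hg)) hu hv
  -- pointwise bound: |u| ⊓ |v| ≤ ‖f - g‖⁻¹ • |(|f| - |g|)|
  have hle : |u| ⊓ |v| ≤ ‖f - g‖⁻¹ • |(|f| - |g|)| := by
    rw [← Lp.coeFn_le]
    filter_upwards [Lp.coeFn_inf |u| |v|, Lp.coeFn_abs u, Lp.coeFn_abs v,
      Lp.coeFn_smul (‖f - g‖⁻¹) (f - g), Lp.coeFn_smul (‖f + g‖⁻¹) (f + g),
      Lp.coeFn_sub f g, Lp.coeFn_add f g,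
      Lp.coeFn_smul (‖f - g‖⁻¹) |(|f| - |g|)|, Lp.coeFn_abs (|f| - |g|),
      Lp.coeFn_sub |f| |g|, Lp.coeFn_abs f, Lp.coeFn_abs g] with x h1 h2 h3 h4 h5 h6 h7 h8 h9 h10 h11 h12
    simp only [h1, Pi.inf_apply, h2, h3, h4, h5, h6, h7, h8, h9, h10, h11, h12,
      Pi.smul_apply, Pi.sub_apply, Pi.add_apply]
    simp only [hu_def, hv_def, h4, h5, h6, h7, Pi.smul_apply, Pi.sub_apply, Pi.add_apply]
    set s := f x; set t := g x
    have habs : |‖f - g‖⁻¹ • (s - t)| = ‖f - g‖⁻¹ * |s - t| := by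
      rw [smul_eq_mul, abs_mul, abs_of_nonneg (le_of_lt (inv_pos.mpr ha))]
    have habs' : |‖f + g‖⁻¹ • (s + t)| = ‖f + g‖⁻¹ * |s + t| := by
      rw [smul_eq_mul, abs_mul, abs_of_nonneg (le_of_lt (inv_pos.mpr hb))]
    rw [habs, habs', smul_eq_mul]
    calc min (‖f - g‖⁻¹ * |s - t|) (‖f + g‖⁻¹ * |s + t|)
        ≤ min (‖f - g‖⁻¹ * |s - t|) (‖f - g‖⁻¹ * |s + t|) := by
          apply min_le_min le_rfl
          exact mul_le_mul_of_nonneg_right (by gcongr) (abs_nonneg _)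
      _ = ‖f - g‖⁻¹ * min |s - t| |s + t| := by
          rw [mul_min_of_nonneg _ _ (le_of_lt (inv_pos.mpr ha))]
      _ ≤ ‖f - g‖⁻¹ * |(|s| - |t|)| := by
          exact mul_le_mul_of_nonneg_left (min_abs_le_abs_abs_sub_abs s t)
            (le_of_lt (inv_pos.mpr ha))
  -- take norms
  have hpos : (0 : Lp ℝ 1 μ) ≤ |u| ⊓ |v| := le_inf (abs_nonneg u) (abs_nonneg v)
  have hnorm : ‖|u| ⊓ |v|‖ ≤ ‖f - g‖⁻¹ * ‖|f| - |g|‖ := by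
    have hw0 : (0 : Lp ℝ 1 μ) ≤ ‖f - g‖⁻¹ • |(|f| - |g|)| := by
      rw [← Lp.coeFn_nonneg]
      filter_upwards [Lp.coeFn_smul (‖f - g‖⁻¹) |(|f| - |g|)|, Lp.coeFn_abs (|f| - |g|)]
        with x h1 h2
      rw [h1, Pi.smul_apply, h2, smul_eq_mul]
      positivity
    have hsolid : ‖|u| ⊓ |v|‖ ≤ ‖‖f - g‖⁻¹ • |(|f| - |g|)|‖ := by
      apply norm_le_norm_of_abs_le_abs
      rw [abs_of_nonneg hpos, abs_of_nonneg hw0]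
      exact hle
    calc ‖|u| ⊓ |v|‖ ≤ ‖‖f - g‖⁻¹ • |(|f| - |g|)|‖ := hsolid
      _ = ‖f - g‖⁻¹ * ‖|f| - |g|‖ := by
          rw [norm_smul, Real.norm_eq_abs, abs_of_nonneg (le_of_lt (inv_pos.mpr ha)),
            norm_abs_eq_norm]
  have hεa : ε * ‖f - g‖ ≤ ‖|f| - |g|‖ := by
    have := hkey.trans hnorm
    calc ε * ‖f - g‖ ≤ (‖f - g‖⁻¹ * ‖|f| - |g|‖) * ‖f - g‖ :=
          mul_le_mul_of_nonneg_right this (norm_nonneg _)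
      _ = ‖|f| - |g|‖ := by field_simp
  rw [min_eq_left hab]
  rw [div_mul_eq_mul_div, le_div_iff₀ hε]
  nlinarith [norm_nonneg (|f| - |g| : Lp ℝ 1 μ), norm_nonneg (f - g : Lp ℝ 1 μ)]
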